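/- arXiv:2102.00504 — 7 statements merged into one kernel-verified Lean document; each statement's English description precedes it below -/
import Mathlib

section
/- Let C be a cluster in a graph G satisfying geodesic convexity with margin γ: any simple path in G between two vertices of C of length at most (1+γ) times their graph distance lies entirely in C. Let R with C ⊆ R ⊆ V(G) be such that every shortest path in G between two vertices of C lies inside C (hence inside G[R]). Then in G[R], any shortest path from a vertex s ∈ C to a vertex t ∈ R \ C is C-prefixed: there is an index j* such that the first j* vertices of the path are exactly its vertices in C. -/
private lemma get_of_eq_append {α : Type*} {l l₁ l₂ : List α} (h : l = l₁ ++ l₂)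
    {i : ℕ} (hi : i < l₁.length) (hl : i < l.length) :
    l.get ⟨i, hl⟩ = l₁.get ⟨i, hi⟩ := by
  subst h; simp only [List.get_eq_getElem]; exact List.getElem_append_left hi

private lemma lift_walk_induce {V : Type*} {G : SimpleGraph V} {R : Set V} :
    ∀ {a b : V} (w : G.Walk a b), (∀ v ∈ w.support, v ∈ R) →
      ∀ (ha : a ∈ R) (hb : b ∈ R),
      ∃ q : (G.induce R).Walk ⟨a, ha⟩ ⟨b, hb⟩, q.length = w.length := by
  intro a b w
  induction w with
  | nil => intro _ ha hb; exact ⟨SimpleGraph.Walk.nil, rfl⟩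
  | @cons a c b h p ih =>
      intro hR ha hb
      have hc : c ∈ R := hR c (by simp)
      obtain ⟨q, hq⟩ := ih (fun v hv => hR v (by simp [hv])) hc hb
      exact ⟨SimpleGraph.Walk.cons
        (show (G.induce R).Adj ⟨a, ha⟩ ⟨c, hc⟩ from h) q, by simp [hq]⟩


/-- let `C` satisfy geodesic convexity with margin `γ` in `G`
(every simple path between two vertices of `C` of length at most `(1+γ)` times their
graph distance lies in `C`), in particular every shortest path in `G` between two
vertices of `C` lies in `C`.  If `C ⊆ R ⊆ V(G)`, then in the induced subgraph `G[R]`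
any shortest path from `s ∈ C` to `t ∈ R \ C` is `C`-prefixed: there is an index `j*`
such that the `j`-th vertex of the path belongs to `C` iff `j < j*`. -/
theorem stmt_4 {V : Type*} [Fintype V] [DecidableEq V] (G : SimpleGraph V)
    (C R : Set V) (γ : ℝ) (hγ0 : 0 < γ) (hγ1 : γ ≤ 1)
    (hCR : C ⊆ R)
    (hconv : ∀ x ∈ C, ∀ y ∈ C, ∀ p : G.Walk x y, p.IsPath →
      (p.length : ℝ) ≤ (1 + γ) * (G.dist x y) → ∀ v ∈ p.support, v ∈ C)
    (hshort : ∀ x ∈ C, ∀ y ∈ C, ∀ p : G.Walk x y, p.IsPath →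
      p.length = G.dist x y → ∀ v ∈ p.support, v ∈ C) :
    ∀ (s t : V) (hs : s ∈ C) (ht : t ∈ R) (htC : t ∉ C)
      (p : (G.induce R).Walk ⟨s, hCR hs⟩ ⟨t, ht⟩),
      p.IsPath → p.length = (G.induce R).dist ⟨s, hCR hs⟩ ⟨t, ht⟩ →
      ∃ jstar : ℕ, 1 ≤ jstar ∧
        ∀ (j : ℕ) (hj : j < p.support.length),
          ((p.support.get ⟨j, hj⟩ : V) ∈ C ↔ j < jstar) := by
  classical
  intro s t hs ht htC p hpath hlen
  -- Key claim: the prefix of p up to any C-vertex x on p lies entirely in C.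
  have key : ∀ (x : R) (hx : x ∈ p.support), (x : V) ∈ C →
      ∀ y ∈ (p.takeUntil x hx).support, (y : V) ∈ C := by
    intro x hx hxC
    have hqr : (p.takeUntil x hx).append (p.dropUntil x hx) = p := p.take_spec hx
    have hql : (p.takeUntil x hx).length + (p.dropUntil x hx).length = p.length := by
      conv_rhs => rw [← hqr]
      rw [SimpleGraph.Walk.length_append]
    have hqpath : (p.takeUntil x hx).IsPath := hpath.takeUntil hx
    -- map the prefix into G
    let emb : G.induce R ↪g G := SimpleGraph.Embedding.induce R
    let mq : G.Walk s (x : V) := (p.takeUntil x hx).map emb.toHom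
    have hmqlen : mq.length = (p.takeUntil x hx).length :=
      SimpleGraph.Walk.length_map _ _
    have hmqpath : mq.IsPath :=
      SimpleGraph.Walk.map_isPath_of_injective emb.injective hqpath
    have hreach : G.Reachable s (x : V) := ⟨mq⟩
    obtain ⟨w, hwpath, hwlen⟩ := hreach.exists_path_of_dist
    have hwC : ∀ v ∈ w.support, v ∈ C := hshort s hs (x : V) hxC w hwpath hwlen
    obtain ⟨w', hw'len⟩ := lift_walk_induce (R := R) w
      (fun v hv => hCR (hwC v hv)) (hCR hs) x.2
    have hxeq : (⟨(x : V), x.2⟩ : R) = x := rfl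
    have hdist : (G.induce R).dist ⟨s, hCR hs⟩ ⟨t, ht⟩
        ≤ w'.length + (p.dropUntil x hx).length := by
      have := SimpleGraph.dist_le ((hxeq ▸ w').append (p.dropUntil x hx))
      rwa [SimpleGraph.Walk.length_append, show (hxeq ▸ w' :
        (G.induce R).Walk ⟨s, hCR hs⟩ x).length = w'.length from by
          cases hxeq; rfl] at this
    have hqw : (p.takeUntil x hx).length ≤ w.length := by omega
    have hdle : G.dist s (x : V) ≤ mq.length := SimpleGraph.dist_le mq
    have hmq_dist : mq.length = G.dist s (x : V) := by omega
    -- shortest G-path between C-vertices lies in C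
    have hmqC : ∀ v ∈ mq.support, v ∈ C :=
      hshort s hs (x : V) hxC mq hmqpath hmq_dist
    intro y hy
    apply hmqC
    have : mq.support = (p.takeUntil x hx).support.map emb.toHom :=
      SimpleGraph.Walk.support_map _ _
    rw [this]
    exact List.mem_map_of_mem hy
  -- downward closedness on indices
  have down : ∀ (i j : ℕ) (hi : i < p.support.length) (hj : j < p.support.length),
      i ≤ j → ((p.support.get ⟨j, hj⟩ : V) ∈ C) →
      ((p.support.get ⟨i, hi⟩ : V) ∈ C) := by
    intro i j hi hj hij hjC
    set x := p.support.get ⟨j, hj⟩ with hxdef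
    have hx : x ∈ p.support := List.get_mem _ _
    have hsup : p.support = (p.takeUntil x hx).support
        ++ (p.dropUntil x hx).support.tail := by
      conv_lhs => rw [← p.take_spec hx]
      exact SimpleGraph.Walk.support_append _ _
    have hlt : (p.takeUntil x hx).length < p.support.length := by
      have h1 : p.support.length = (p.takeUntil x hx).support.length
          + (p.dropUntil x hx).support.tail.length := by
        rw [hsup, List.length_append]
      have h2 : (p.takeUntil x hx).support.length
          = (p.takeUntil x hx).length + 1 := SimpleGraph.Walk.length_support _
      omega
    have h2 : (p.takeUntil x hx).support.length
        = (p.takeUntil x hx).length + 1 := SimpleGraph.Walk.length_support _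
    -- the vertex at index (takeUntil).length is x
    have hgetq : p.support.get ⟨(p.takeUntil x hx).length, hlt⟩ = x := by
      have hlt' : (p.takeUntil x hx).length < (p.takeUntil x hx).support.length := by
        omega
      rw [get_of_eq_append hsup hlt']
      have hlast := SimpleGraph.Walk.getLast_support (p.takeUntil x hx)
      rw [List.getLast_eq_getElem] at hlast
      rw [show (⟨(p.takeUntil x hx).length, hlt'⟩ :
          Fin (p.takeUntil x hx).support.length)
          = ⟨(p.takeUntil x hx).support.length - 1, by omega⟩ from
        Fin.ext (by simp only []; omega)]
      simpa only [List.get_eq_getElem] using hlast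
    -- by nodup, j = (takeUntil).length
    have hnodup : p.support.Nodup := hpath.support_nodup
    have hjeq : j = (p.takeUntil x hx).length := by
      have : p.support.get ⟨j, hj⟩ = p.support.get ⟨(p.takeUntil x hx).length, hlt⟩ := by
        rw [hgetq]
      exact Fin.mk_eq_mk.mp ((List.Nodup.get_inj_iff hnodup).mp this)
    -- i-th vertex is in the takeUntil support
    have hi' : i < (p.takeUntil x hx).support.length := by omega
    rw [get_of_eq_append hsup hi']
    exact key x hx hjC _ (List.get_mem _ _)
  -- define jstar via Nat.find
  have hP : ∃ n : ℕ, ∃ h : n < p.support.length, (p.support.get ⟨n, h⟩ : V) ∉ C := by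
    refine ⟨p.support.length - 1, ?_, ?_⟩
    · have := SimpleGraph.Walk.length_support p; omega
    · have hne : p.support ≠ [] := SimpleGraph.Walk.support_ne_nil _
      have hlast := SimpleGraph.Walk.getLast_support p
      rw [List.getLast_eq_getElem] at hlast
      simp only [List.get_eq_getElem]
      rw [hlast]
      exact htC
  refine ⟨Nat.find hP, ?_, ?_⟩
  · rcases Nat.eq_zero_or_pos (Nat.find hP) with h0 | h1
    · exfalso
      obtain ⟨hlt0, hnot⟩ := h0 ▸ Nat.find_spec hP
      apply hnot
      have : p.support.get ⟨0, hlt0⟩ = ⟨s, hCR hs⟩ := by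
        have := SimpleGraph.Walk.head_support p
        rwa [← List.get_mk_zero hlt0] at this
      rw [this]
      exact hs
    · exact h1
  · intro j hj
    constructor
    · intro hjC
      by_contra hge
      push_neg at hge
      obtain ⟨hlt, hnot⟩ := Nat.find_spec hP
      exact hnot (down (Nat.find hP) j hlt hj hge hjC)
    · intro hjlt
      have := Nat.find_min hP hjlt
      push_neg at this
      exact not_not.mp (by simpa using this hj)
end

section
/- Let G be a graph, and C_i, C_j disjoint vertex subsets each satisfying geodesic convexity with margin γ in G. Let (u_i, u_j) be an edge of G with u_i ∈ C_i, u_j ∈ C_j. Then for any vertex x with 1/γ ≤ d_G(u_i, x) < ∞: if d_G(u_i,x) ≤ d_G(u_j,x), then x ∉ C_j; and if d_G(u_i,x) ≥ d_G(u_j,x), then x ∉ C_i. -/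
lemma stmt5_key {V : Type*} [DecidableEq V] (G : SimpleGraph V)
    (Ca Cb : Set V) (hdisj : Disjoint Ca Cb) (γ : ℝ) (hγ0 : 0 < γ)
    (hconvB : ∀ x ∈ Cb, ∀ y ∈ Cb, ∀ p : G.Walk x y, p.IsPath →
      (p.length : ℝ) ≤ (1 + γ) * (G.dist x y) → ∀ v ∈ p.support, v ∈ Cb)
    (a b x : V) (hadj : G.Adj a b) (ha : a ∈ Ca) (hb : b ∈ Cb) (hx : x ∈ Cb)
    (hreach : G.Reachable a x) (hle : G.dist a x ≤ G.dist b x)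
    (hγd : 1 ≤ γ * (G.dist b x : ℝ)) : False := by
  obtain ⟨p, hp, hlen⟩ := hreach.exists_path_of_dist
  have hbp : b ∉ p.support := by
    intro hbs
    have hsplit := p.take_spec hbs
    have hlens : (p.takeUntil b hbs).length + (p.dropUntil b hbs).length = p.length := by
      rw [← SimpleGraph.Walk.length_append, hsplit]
    have h1 : 1 ≤ (p.takeUntil b hbs).length := by
      rcases Nat.eq_zero_or_pos (p.takeUntil b hbs).length with h0 | h0
      · exact absurd (SimpleGraph.Walk.eq_of_length_eq_zero h0) hadj.ne
      · exact h0
    have h2 : G.dist b x ≤ (p.dropUntil b hbs).length := SimpleGraph.dist_le _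
    omega
  have hap : a ∈ (SimpleGraph.Walk.cons hadj.symm p).support := by
    simp
  have hq : (SimpleGraph.Walk.cons hadj.symm p).IsPath :=
    SimpleGraph.Walk.IsPath.cons hp hbp
  have hcast : ((G.dist a x : ℝ)) ≤ (G.dist b x : ℝ) := by exact_mod_cast hle
  have hqlen : ((SimpleGraph.Walk.cons hadj.symm p).length : ℝ) ≤ (1 + γ) * (G.dist b x) := by
    have : ((SimpleGraph.Walk.cons hadj.symm p).length : ℝ) = (G.dist a x : ℝ) + 1 := by
      rw [SimpleGraph.Walk.length_cons, hlen]
      push_cast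
      ring
    rw [this]
    linarith
  have haCb : a ∈ Cb := hconvB b hb x hx _ hq hqlen a hap
  exact Set.disjoint_left.mp hdisj ha haCb

/-- let `C_i, C_j` be disjoint vertex sets, each geodesically convex
with margin `γ` in `G`, and `(u_i, u_j)` an edge with `u_i ∈ C_i`, `u_j ∈ C_j`.
Then for any vertex `x` with `1/γ ≤ d_G(u_i, x) < ∞`:
if `d_G(u_i,x) ≤ d_G(u_j,x)` then `x ∉ C_j`, and
if `d_G(u_i,x) ≥ d_G(u_j,x)` then `x ∉ C_i`. -/
theorem stmt_5 {V : Type*} [Fintype V] [DecidableEq V] (G : SimpleGraph V)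
    (Ci Cj : Set V) (hdisj : Disjoint Ci Cj) (γ : ℝ) (hγ0 : 0 < γ) (hγ1 : γ ≤ 1)
    (hconvI : ∀ x ∈ Ci, ∀ y ∈ Ci, ∀ p : G.Walk x y, p.IsPath →
      (p.length : ℝ) ≤ (1 + γ) * (G.dist x y) → ∀ v ∈ p.support, v ∈ Ci)
    (hconvJ : ∀ x ∈ Cj, ∀ y ∈ Cj, ∀ p : G.Walk x y, p.IsPath →
      (p.length : ℝ) ≤ (1 + γ) * (G.dist x y) → ∀ v ∈ p.support, v ∈ Cj)
    (ui uj : V) (hadj : G.Adj ui uj) (hui : ui ∈ Ci) (huj : uj ∈ Cj) :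
    ∀ x : V, G.Reachable ui x → 1 / γ ≤ (G.dist ui x : ℝ) →
      ((G.dist ui x ≤ G.dist uj x → x ∉ Cj) ∧
       (G.dist uj x ≤ G.dist ui x → x ∉ Ci)) := by
  intro x hreach hd
  have hγd : 1 ≤ γ * (G.dist ui x : ℝ) := by
    rw [div_le_iff₀ hγ0] at hd
    nlinarith
  constructor
  · intro hle hxCj
    have hγd' : 1 ≤ γ * (G.dist uj x : ℝ) := by
      have : (G.dist ui x : ℝ) ≤ (G.dist uj x : ℝ) := by exact_mod_cast hle
      nlinarith
    exact stmt5_key G Ci Cj hdisj γ hγ0 hconvJ ui uj x hadj hui huj hxCj hreach hle hγd'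
  · intro hle hxCi
    have hreach' : G.Reachable uj x := (SimpleGraph.Adj.reachable hadj.symm).trans hreach
    exact stmt5_key G Cj Ci hdisj.symm γ hγ0 hconvI uj ui x hadj.symm huj hui hxCi hreach' hle hγd
end

section
/- Let G be a graph and C_i a vertex subset satisfying geodesic convexity with margin γ. Let (u_i, u_j) be an edge of G with u_i ∈ C_i, u_j ∉ C_i. Suppose x, y are vertices with (x,y) an edge of G, d_G(u_i, x) ≥ 2/γ + 1, d_G(u_i, x) ≤ d_G(u_j, x) (x on the 'i-side'), and d_G(u_j, y) < d_G(u_i, y) (y on the 'j-side'). Then x ∉ C_i. -/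
open SimpleGraph


/-- let `C_i` satisfy geodesic convexity with margin `γ` in `G`,
and `(u_i, u_j)` be an edge with `u_i ∈ C_i`, `u_j ∉ C_i`.  If `(x,y)` is an edge with
`d_G(u_i,x) ≥ 2/γ + 1`, `d_G(u_i,x) ≤ d_G(u_j,x)` and `d_G(u_j,y) < d_G(u_i,y)`,
then `x ∉ C_i`. -/
theorem stmt_6 {V : Type*} [Fintype V] [DecidableEq V] (G : SimpleGraph V)
    (Ci : Set V) (γ : ℝ) (hγ0 : 0 < γ) (hγ1 : γ ≤ 1)
    (hconv : ∀ a ∈ Ci, ∀ b ∈ Ci, ∀ p : G.Walk a b, p.IsPath →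
      (p.length : ℝ) ≤ (1 + γ) * (G.dist a b) → ∀ v ∈ p.support, v ∈ Ci)
    (ui uj : V) (hadj : G.Adj ui uj) (hui : ui ∈ Ci) (huj : uj ∉ Ci)
    (x y : V) (hxy : G.Adj x y)
    (hreach_x : G.Reachable ui x) (hreach_y : G.Reachable uj y)
    (hfar : 2 / γ + 1 ≤ (G.dist ui x : ℝ))
    (hx_side : G.dist ui x ≤ G.dist uj x)
    (hy_side : G.dist uj y < G.dist ui y) :
    x ∉ Ci := by
  intro hx
  obtain ⟨p, hp, hplen⟩ := hreach_y.exists_path_of_dist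
  -- d(ui,y) ≤ d(ui,x) + 1
  obtain ⟨q, hq, hqlen⟩ := hreach_x.exists_path_of_dist
  have hiy : G.dist ui y ≤ G.dist ui x + 1 := by
    have := G.dist_le (q.append hxy.toWalk)
    simpa [Walk.length_append, hqlen] using this
  -- any vertex on p splits dist
  have hsplit : ∀ v (hv : v ∈ p.support),
      G.dist uj v + G.dist v y ≤ G.dist uj y := by
    intro v hv
    have h1 := G.dist_le (p.takeUntil v hv)
    have h2 := G.dist_le (p.dropUntil v hv)
    have h3 : (p.takeUntil v hv).length + (p.dropUntil v hv).length = p.length := by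
      rw [← Walk.length_append, Walk.take_spec]
    omega
  have hui_notp : ui ∉ p.support := by
    intro h
    have := hsplit ui h
    omega
  have hx_notp : x ∉ p.support := by
    intro h
    have h1 := hsplit x h
    have hxy1 : 1 ≤ G.dist x y := by
      have : G.dist x y ≠ 0 := by
        rw [SimpleGraph.dist_ne_zero_iff_ne_and_reachable]
        exact ⟨hxy.ne, hxy.reachable⟩
      omega
    omega
  have hfar3 : (3 : ℝ) ≤ (G.dist ui x : ℝ) := by
    have h2 : (2:ℝ) ≤ 2 / γ := by
      rw [le_div_iff₀ hγ0]; nlinarith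
    linarith
  have hui_ne_x : ui ≠ x := by
    intro h; subst h
    rw [SimpleGraph.dist_self] at hfar3
    norm_num at hfar3
  -- build the walk
  set W : G.Walk ui x := Walk.cons hadj (p.append hxy.symm.toWalk) with hW
  have hWsupp : W.support = ui :: (p.support ++ [x]) := by
    simp [hW, Walk.support_append]
  have hWpath : W.IsPath := by
    rw [Walk.isPath_def, hWsupp]
    simp only [List.nodup_cons, List.mem_append, List.mem_singleton]
    refine ⟨?_, ?_⟩
    · rintro (h | h)
      exacts [hui_notp h, hui_ne_x h]
    · rw [List.nodup_append]
      exact ⟨hp.support_nodup, List.nodup_singleton x,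
        by intro a ha b hb hab; simp at hb; rw [hab, hb] at ha; exact hx_notp ha⟩
  have hWlen : W.length = G.dist uj y + 2 := by
    simp [hW, Walk.length_append, hplen]
  have hdjy : G.dist uj y ≤ G.dist ui x := by omega
  have hlen : (W.length : ℝ) ≤ (1 + γ) * (G.dist ui x) := by
    rw [hWlen]
    push_cast
    have h2 : (2:ℝ) ≤ γ * (G.dist ui x) := by
      rw [← div_le_iff₀' hγ0]; linarith
    have : (G.dist uj y : ℝ) ≤ (G.dist ui x : ℝ) := by exact_mod_cast hdjy
    nlinarith
  exact huj (hconv ui hui x hx W hWpath hlen uj (by rw [hWsupp]; simp))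
end

section
/- Let T be a minimum spanning tree of a finite connected weighted graph G with edge weights w. For any ε > 0, let G(ε) (resp. T(ε)) be the subgraph of G (resp. T) keeping only edges of weight at most ε. Then the connected components of T(ε) coincide with the connected components of G(ε), i.e., two vertices are connected in T(ε) iff they are connected in G(ε). -/
/-- The threshold subgraph of `G`: keep only edges of weight at most `ε`. -/
def threshGraph {V : Type*} (G : SimpleGraph V) (w : Sym2 V → ℝ) (ε : ℝ) :
    SimpleGraph V where
  Adj a b := G.Adj a b ∧ w s(a, b) ≤ ε
  symm := by
    constructor
    intro a b h
    refine ⟨h.1.symm, ?_⟩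
    rw [Sym2.eq_swap]
    exact h.2
  loopless := by
    constructor
    intro a h
    exact G.irrefl h.1

private lemma cross_edge {V : Type*} {T : SimpleGraph V} (S : Set V) :
    ∀ {a b : V} (p : T.Walk a b), a ∈ S → b ∉ S →
      ∃ x y, x ∈ S ∧ y ∉ S ∧ s(x, y) ∈ p.edges := by
  intro a b p
  induction p with
  | nil => exact fun h h' => absurd h h'
  | @cons u c b h q ih =>
    intro ha hb
    by_cases hc : c ∈ S
    · obtain ⟨x, y, h1, h2, h3⟩ := ih hc hb
      exact ⟨x, y, h1, h2, by simp [h3]⟩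
    · exact ⟨u, c, ha, hc, by simp⟩

private lemma side_reach_aux {V : Type*} {T : SimpleGraph V} (x y : V) :
    ∀ {v z : V} (q : T.Walk v z),
      (T.deleteEdges {s(x, y)}).Reachable v z ∨
      (T.deleteEdges {s(x, y)}).Reachable v x ∨
      (T.deleteEdges {s(x, y)}).Reachable v y := by
  intro v z q
  induction q with
  | nil => exact Or.inl (SimpleGraph.Reachable.refl _)
  | @cons u c _ h q ih =>
    by_cases he : s(u, c) = s(x, y)
    · rw [Sym2.eq_iff] at he
      rcases he with ⟨rfl, rfl⟩ | ⟨rfl, rfl⟩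
      · exact Or.inr (Or.inl (SimpleGraph.Reachable.refl _))
      · exact Or.inr (Or.inr (SimpleGraph.Reachable.refl _))
    · have hadj : (T.deleteEdges {s(x, y)}).Adj u c := by
        rw [SimpleGraph.deleteEdges_adj]
        exact ⟨h, by simpa using he⟩
      rcases ih with h' | h' | h'
      · exact Or.inl (hadj.reachable.trans h')
      · exact Or.inr (Or.inl (hadj.reachable.trans h'))
      · exact Or.inr (Or.inr (hadj.reachable.trans h'))

private lemma side_reach {V : Type*} {T : SimpleGraph V} {x y : V} :
    ∀ {v : V} (q : T.Walk v x),
      (T.deleteEdges {s(x, y)}).Reachable v x ∨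
      (T.deleteEdges {s(x, y)}).Reachable v y := by
  intro v q
  rcases side_reach_aux x y q with h | h | h
  · exact Or.inl h
  · exact Or.inl h
  · exact Or.inr h

/-- if `T` is a minimum spanning tree of a finite connected weighted
graph `G`, then for every `ε > 0` the connected components of `T(ε)` coincide with
those of `G(ε)`: two vertices are connected in `T(ε)` iff they are connected in `G(ε)`. -/
theorem stmt_8 {V : Type*} [Fintype V] [DecidableEq V]
    (G : SimpleGraph V) (w : Sym2 V → ℝ)
    (hw : ∀ e ∈ G.edgeSet, 0 < w e)
    (hGconn : G.Connected)
    (T : SimpleGraph V) (hTG : T ≤ G) (hTree : T.IsTree)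
    (hmin : ∀ T' : SimpleGraph V, T' ≤ G → T'.IsTree →
      ∑ e ∈ (Set.toFinite T.edgeSet).toFinset, w e ≤
      ∑ e ∈ (Set.toFinite T'.edgeSet).toFinset, w e) :
    ∀ ε : ℝ, 0 < ε → ∀ u v : V,
      (threshGraph T w ε).Reachable u v ↔ (threshGraph G w ε).Reachable u v := by
  classical
  intro ε hε u v
  have key : ∀ a b : V, G.Adj a b → w s(a, b) ≤ ε → (threshGraph T w ε).Reachable a b := by
    intro a b hab hwab
    by_contra hnR
    set H := threshGraph T w ε with hH
    set S : Set V := {z | H.Reachable a z} with hS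
    have haS : a ∈ S := SimpleGraph.Reachable.refl a
    have hbS : b ∉ S := hnR
    obtain ⟨p0⟩ := hTree.isConnected.preconnected a b
    obtain ⟨x, y, hxS, hyS, hf⟩ := cross_edge S p0.toPath.1 haS hbS
    have hfT : T.Adj x y := p0.toPath.1.adj_of_mem_edges hf
    have hwf : ε < w s(x, y) := by
      by_contra hle
      push_neg at hle
      exact hyS (hxS.trans (SimpleGraph.Adj.reachable ⟨hfT, hle⟩))
    set f := s(x, y) with hfdef
    set Td := T.deleteEdges {f} with hTd
    have hTdT : Td ≤ T := T.deleteEdges_le _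
    have hHTd : H ≤ Td := by
      intro u' v' h'
      rw [hTd, SimpleGraph.deleteEdges_adj]
      refine ⟨h'.1, ?_⟩
      simp only [Set.mem_singleton_iff]
      intro hcon
      have : w s(u', v') ≤ ε := h'.2
      rw [hcon] at this
      linarith
    have hax : Td.Reachable a x := SimpleGraph.Reachable.mono hHTd hxS
    -- f is a bridge of T separating a from b
    have huniq : ¬ Td.Reachable a b := by
      rintro ⟨q⟩
      have hqedges : ∀ e ∈ q.toPath.1.edges, e ∈ T.edgeSet := by
        intro e he
        have := q.toPath.1.edges_subset_edgeSet he
        rw [hTd, SimpleGraph.edgeSet_deleteEdges] at this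
        exact this.1
      have hqf : f ∉ q.toPath.1.edges := by
        intro hcon
        have := q.toPath.1.edges_subset_edgeSet hcon
        rw [hTd, SimpleGraph.edgeSet_deleteEdges] at this
        exact this.2 rfl
      have hpath : (q.toPath.1.transfer T hqedges).IsPath := q.toPath.2.transfer _
      have hequal := hTree.IsAcyclic.path_unique ⟨q.toPath.1.transfer T hqedges, hpath⟩ p0.toPath
      have hco : (q.toPath.1.transfer T hqedges) = p0.toPath.1 := congrArg Subtype.val hequal
      have : f ∈ (q.toPath.1.transfer T hqedges).edges := by
        rw [hco]; exact hf
      rw [SimpleGraph.Walk.edges_transfer] at this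
      exact hqf this
    have hby : Td.Reachable b y := by
      obtain ⟨q0⟩ := hTree.isConnected.preconnected b x
      rcases side_reach (y := y) q0 with hbx | hby
      · exact absurd (hax.trans hbx.symm) huniq
      · exact hby
    have hne : a ≠ b := hab.ne
    have heT : ¬ T.Adj a b := fun h => hnR (SimpleGraph.Adj.reachable ⟨h, hwab⟩)
    have hef : s(a, b) ≠ f := by
      intro hcon
      rw [hcon] at hwab
      linarith
    -- the exchanged tree
    set T' : SimpleGraph V :=
      { Adj := fun u' v' => Td.Adj u' v' ∨ (u' = a ∧ v' = b) ∨ (u' = b ∧ v' = a)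
        symm := by
          constructor
          rintro u' v' (h | ⟨rfl, rfl⟩ | ⟨rfl, rfl⟩)
          · exact Or.inl h.symm
          · exact Or.inr (Or.inr ⟨rfl, rfl⟩)
          · exact Or.inr (Or.inl ⟨rfl, rfl⟩)
        loopless := by
          constructor
          rintro u' (h | ⟨rfl, rfl⟩ | ⟨rfl, rfl⟩)
          · exact Td.irrefl h
          · exact hne rfl
          · exact hne rfl } with hT'
    have hTdT' : Td ≤ T' := fun u' v' h => Or.inl h
    have hT'G : T' ≤ G := by
      rintro u' v' (h | ⟨rfl, rfl⟩ | ⟨rfl, rfl⟩)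
      · exact hTG (hTdT h)
      · exact hab
      · exact hab.symm
    have hT'ab : T'.Adj a b := Or.inr (Or.inl ⟨rfl, rfl⟩)
    -- connectivity of T'
    have hT'pre : T'.Preconnected := by
      have hreach : ∀ z, T'.Reachable z a := by
        intro z
        obtain ⟨qz⟩ := hTree.isConnected.preconnected z x
        rcases side_reach (y := y) qz with hz | hz
        · exact (hz.mono hTdT').trans ((hax.mono hTdT').symm)
        · exact (hz.mono hTdT').trans (((hby.mono hTdT').symm).trans hT'ab.symm.reachable)
      intro z1 z2
      exact (hreach z1).trans (hreach z2).symm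
    have hT'conn : T'.Connected := by
      haveI : Nonempty V := hGconn.nonempty
      exact SimpleGraph.Connected.mk hT'pre
    -- acyclicity of T'
    have hT'acyc : T'.IsAcyclic := by
      intro v0 c hc
      by_cases hec : s(a, b) ∈ c.edges
      · have hkey : T'.Adj a b ∧ (T' \ SimpleGraph.fromEdgeSet {s(a, b)}).Reachable a b :=
          SimpleGraph.adj_and_reachable_delete_edges_iff_exists_cycle.mpr ⟨v0, c, hc, hec⟩
        have hle : (T' \ SimpleGraph.fromEdgeSet {s(a, b)}) ≤ Td := by
          intro u' v' h'
          rw [SimpleGraph.sdiff_adj] at h'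
          obtain ⟨h1, h2⟩ := h'
          rw [SimpleGraph.fromEdgeSet_adj] at h2
          push_neg at h2
          rcases h1 with h | ⟨rfl, rfl⟩ | ⟨rfl, rfl⟩
          · exact h
          · exact absurd (h2 (Set.mem_singleton _)) hne
          · exact absurd ((h2 (by rw [Set.mem_singleton_iff, Sym2.eq_swap])).symm) hne
        exact huniq (hkey.2.mono hle)
      · have hedges : ∀ e ∈ c.edges, e ∈ T.edgeSet := by
          intro e he
          have hmem := c.edges_subset_edgeSet he
          induction e with
          | _ u' v' =>
            rw [SimpleGraph.mem_edgeSet] at hmem ⊢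
            rcases hmem with h | ⟨rfl, rfl⟩ | ⟨rfl, rfl⟩
            · exact hTdT h
            · exact absurd he hec
            · rw [Sym2.eq_swap] at he
              exact absurd he hec
        exact hTree.IsAcyclic _ (hc.transfer hedges)
    have hT'tree : T'.IsTree := ⟨hT'conn, hT'acyc⟩
    -- edge set computation
    set A := (Set.toFinite T.edgeSet).toFinset with hA
    set A' := (Set.toFinite T'.edgeSet).toFinset with hA'
    have hA'eq : A' = insert (s(a, b)) (A.erase f) := by
      ext g
      induction g with
      | _ u' v' =>
        simp only [hA', hA, Set.Finite.mem_toFinset, SimpleGraph.mem_edgeSet,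
          Finset.mem_insert, Finset.mem_erase]
        constructor
        · rintro (h | ⟨rfl, rfl⟩ | ⟨rfl, rfl⟩)
          · rw [hTd, SimpleGraph.deleteEdges_adj] at h
            exact Or.inr ⟨by simpa using h.2, h.1⟩
          · exact Or.inl rfl
          · exact Or.inl Sym2.eq_swap
        · rintro (h | ⟨hne', h⟩)
          · rw [Sym2.eq_iff] at h
            rcases h with ⟨rfl, rfl⟩ | ⟨rfl, rfl⟩
            · exact Or.inr (Or.inl ⟨rfl, rfl⟩)
            · exact Or.inr (Or.inr ⟨rfl, rfl⟩)
          · exact Or.inl (by rw [hTd, SimpleGraph.deleteEdges_adj]; exact ⟨h, by simpa using hne'⟩)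
    have hfA : f ∈ A := by
      rw [hA, Set.Finite.mem_toFinset]
      exact hfT
    have heA : s(a, b) ∉ A.erase f := by
      intro hcon
      have := Finset.mem_of_mem_erase hcon
      rw [hA, Set.Finite.mem_toFinset] at this
      exact heT this
    have hsum : ∑ e ∈ A', w e = w s(a, b) + (∑ e ∈ A, w e - w f) := by
      rw [hA'eq, Finset.sum_insert heA, Finset.sum_erase_eq_sub hfA]
    have hmin' := hmin T' hT'G hT'tree
    have hmin'' : ∑ e ∈ A, w e ≤ ∑ e ∈ A', w e := hmin'
    rw [hsum] at hmin''
    linarith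
  constructor
  · intro h
    have hle2 : threshGraph T w ε ≤ threshGraph G w ε := fun u' v' h' => ⟨hTG h'.1, h'.2⟩
    exact h.mono hle2
  · intro h
    have main : ∀ {u' v' : V} (p : (threshGraph G w ε).Walk u' v'),
        (threshGraph T w ε).Reachable u' v' := by
      intro u' v' p
      induction p with
      | nil => exact SimpleGraph.Reachable.refl _
      | cons h' q ih => exact (key _ _ h'.1 h'.2).trans ih
    obtain ⟨p⟩ := h
    exact main p
end

section
/- Let C = (C₁,...,C_k) be a (β,γ)-convex clustering of a finite semimetric space X with per-cluster radii ε₁ ≤ ... ≤ ε_k (generalized definition). Let ε* = ε₁ and let X* be the vertex set of the connected component of G_X(ε*) containing C₁. Then the induced clustering (C₁ ∩ X*, ..., C_k ∩ X*) on X* satisfies, with the single radius ε*: (1) each nonempty C_i ∩ X* induces a connected subgraph of G_{X*}(ε*); (2) for x ∈ C_i ∩ X* and y ∈ X* \ C_i, d(x,y) > βε*; (3) for x,y ∈ C_i ∩ X*, any simple path in G_{X*}(ε*) between x and y of length at most (1+γ)·d_{G_{X*}(ε*)}(x,y) lies in C_i ∩ X*. -/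
section Aux

open SimpleGraph

lemma aux_support_mem_of_closed {V : Type*} {G : SimpleGraph V} {S : Set V}
    (hS : ∀ ⦃a b⦄, a ∈ S → G.Adj a b → b ∈ S) :
    ∀ {x y : V} (p : G.Walk x y), x ∈ S → ∀ v ∈ p.support, v ∈ S := by
  intro x y p
  induction p with
  | nil => intro hx v hv; simp at hv; subst hv; exact hx
  | cons h q ih =>
    intro hx v hv
    rw [SimpleGraph.Walk.support_cons] at hv
    rcases List.mem_cons.mp hv with rfl | hv
    · exact hx
    · exact ih (hS hx h) v hv

lemma aux_reachable_induce_of_support {V : Type*} {G : SimpleGraph V} {S : Set V} :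
    ∀ {x y : V} (p : G.Walk x y), (∀ v ∈ p.support, v ∈ S) →
    ∀ (hx : x ∈ S) (hy : y ∈ S), (G.induce S).Reachable ⟨x, hx⟩ ⟨y, hy⟩ := by
  intro x y p
  induction p with
  | nil => intro _ hx hy; rfl
  | @cons a b c h q ih =>
    intro hp hx hy
    have hb : b ∈ S := hp b (by simp)
    have hadj : (G.induce S).Adj ⟨a, hx⟩ ⟨b, hb⟩ := h
    exact hadj.reachable.trans
      (ih (fun v hv => hp v (by rw [SimpleGraph.Walk.support_cons]; exact List.mem_cons_of_mem _ hv)) hb hy)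

end Aux
/-- The ε-neighborhood graph of a semimetric `d`. -/
def nbrGraph {V : Type*} (d : V → V → ℝ) (ε : ℝ) : SimpleGraph V where
  Adj a b := a ≠ b ∧ d a b ≤ ε ∧ d b a ≤ ε
  symm := ⟨fun _ _ h => ⟨h.1.symm, h.2.2, h.2.1⟩⟩
  loopless := ⟨fun _ h => h.1 rfl⟩

/-- The ε-neighborhood graph restricted to a ground set `S`
(this is `G_S(ε)`, viewed as a graph on the ambient vertex type). -/
def nbrGraphOn {V : Type*} (d : V → V → ℝ) (S : Set V) (ε : ℝ) : SimpleGraph V where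
  Adj a b := a ≠ b ∧ a ∈ S ∧ b ∈ S ∧ d a b ≤ ε ∧ d b a ≤ ε
  symm := ⟨fun _ _ h => ⟨h.1.symm, h.2.2.1, h.2.1, h.2.2.2.2, h.2.2.2.1⟩⟩
  loopless := ⟨fun _ h => h.1 rfl⟩

/-- if `(C₁,…,C_k)` is a generalized `(β,γ)`-convex clustering of `X`
with radii `ε₁ ≤ … ≤ ε_k`, `ε* = ε₁`, and `X*` is the vertex set of the connected
component of `G_X(ε*)` containing `C₁`, then the induced clustering
`(C₁ ∩ X*, …, C_k ∩ X*)` is `(β,γ)`-convex on `X*` with the single radius `ε*`: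
connectedness, local metric margin and geodesic convexity with margin all hold
in `G_{X*}(ε*)`. -/
theorem stmt_10 {V : Type*} [Fintype V] [DecidableEq V] (d : V → V → ℝ)
    (hd_symm : ∀ x y, d x y = d y x)
    (k : ℕ) (hk : 0 < k) (C : Fin k → Set V)
    (hdisj : ∀ i j, i ≠ j → Disjoint (C i) (C j))
    (hcover : ∀ x : V, ∃ i, x ∈ C i)
    (hne : ∀ i, (C i).Nonempty)
    (β γ : ℝ) (hβ : 0 < β) (hβ1 : β ≤ 1) (hγ : 0 < γ) (hγ1 : γ ≤ 1)
    (ε : Fin k → ℝ) (hεpos : ∀ i, 0 < ε i)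
    (hmono : ∀ i j : Fin k, i ≤ j → ε i ≤ ε j)
    (hconn : ∀ i, ((nbrGraph d (ε i)).induce (C i)).Connected)
    (hmargin : ∀ i, ∀ x ∈ C i, ∀ y ∉ C i, β * ε i < d x y)
    (hconv : ∀ i, ∀ e : ℝ, e ≤ ε i → ∀ x ∈ C i, ∀ y ∈ C i,
      (nbrGraph d e).Reachable x y →
      ∀ p : (nbrGraph d e).Walk x y, p.IsPath →
        (p.length : ℝ) ≤ (1 + γ) * ((nbrGraph d e).dist x y) →
        ∀ v ∈ p.support, v ∈ C i)
    (Xs : Set V)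
    (hXs : Xs = {x : V | ∃ c ∈ C ⟨0, hk⟩, (nbrGraph d (ε ⟨0, hk⟩)).Reachable c x}) :
    (∀ i, (C i ∩ Xs).Nonempty →
        ((nbrGraphOn d Xs (ε ⟨0, hk⟩)).induce (C i ∩ Xs)).Connected) ∧
    (∀ i, ∀ x ∈ C i ∩ Xs, ∀ y ∈ Xs, y ∉ C i → β * ε ⟨0, hk⟩ < d x y) ∧
    (∀ i, ∀ x ∈ C i ∩ Xs, ∀ y ∈ C i ∩ Xs,
      ∀ p : (nbrGraphOn d Xs (ε ⟨0, hk⟩)).Walk x y, p.IsPath →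
        (p.length : ℝ) ≤ (1 + γ) * ((nbrGraphOn d Xs (ε ⟨0, hk⟩)).dist x y) →
        ∀ v ∈ p.support, v ∈ C i ∩ Xs) := by
  set i0 : Fin k := ⟨0, hk⟩ with hi0
  set ε0 : ℝ := ε i0 with hε0
  -- Xs is closed under adjacency in the full ε0-graph
  have hclosed : ∀ ⦃a b : V⦄, a ∈ Xs → (nbrGraph d ε0).Adj a b → b ∈ Xs := by
    intro a b ha hab
    rw [hXs] at ha ⊢
    obtain ⟨c, hc, hr⟩ := ha
    exact ⟨c, hc, hr.trans hab.reachable⟩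
  have hclosedOn : ∀ ⦃a b : V⦄, a ∈ Xs → (nbrGraphOn d Xs ε0).Adj a b → b ∈ Xs :=
    fun a b _ hab => hab.2.2.1
  have hle : ∀ i : Fin k, ε0 ≤ ε i := fun i => hmono i0 i (Fin.mk_le_of_le_val (Nat.zero_le _))
  -- transfer a full-graph walk with support in Xs to the restricted graph
  have htrans : ∀ {x y : V} (p : (nbrGraph d ε0).Walk x y),
      (∀ v ∈ p.support, v ∈ Xs) →
      ∀ e ∈ p.edges, e ∈ (nbrGraphOn d Xs ε0).edgeSet := by
    intro x y p hsupp e he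
    induction e using Sym2.ind with
    | _ a b =>
      have hadj : (nbrGraph d ε0).Adj a b := p.edges_subset_edgeSet he
      have ha : a ∈ Xs := hsupp a (SimpleGraph.Walk.fst_mem_support_of_mem_edges p he)
      have hb : b ∈ Xs := hsupp b (SimpleGraph.Walk.snd_mem_support_of_mem_edges p he)
      exact ⟨hadj.1, ha, hb, hadj.2.1, hadj.2.2⟩
  -- restricted graph is a subgraph of the full graph
  have hsub : nbrGraphOn d Xs ε0 ≤ nbrGraph d ε0 :=
    fun {a b} h => ⟨h.1, h.2.2.2.1, h.2.2.2.2⟩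
  -- distances agree on Xs
  have hdist : ∀ x y : V, x ∈ Xs →
      (nbrGraph d ε0).Reachable x y →
      (nbrGraphOn d Xs ε0).dist x y = (nbrGraph d ε0).dist x y := by
    intro x y hx hr
    obtain ⟨p, hp, hlen⟩ := hr.exists_path_of_dist
    have hsupp := aux_support_mem_of_closed hclosed p hx
    have hqe := htrans p hsupp
    apply le_antisymm
    · calc (nbrGraphOn d Xs ε0).dist x y ≤ (p.transfer _ hqe).length :=
            SimpleGraph.dist_le _
        _ = p.length := p.length_transfer hqe
        _ = _ := hlen
    · obtain ⟨p', hp', hlen'⟩ := (p.transfer _ hqe).reachable.exists_path_of_dist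
      have hqe' : ∀ e ∈ p'.edges, e ∈ (nbrGraph d ε0).edgeSet :=
        fun e he => SimpleGraph.edgeSet_mono hsub (p'.edges_subset_edgeSet he)
      calc (nbrGraph d ε0).dist x y ≤ (p'.transfer _ hqe').length := SimpleGraph.dist_le _
        _ = p'.length := p'.length_transfer hqe'
        _ = _ := hlen'
  -- part 3 (proved first; reused notationally)
  have part3 : ∀ i, ∀ x ∈ C i ∩ Xs, ∀ y ∈ C i ∩ Xs,
      ∀ p : (nbrGraphOn d Xs ε0).Walk x y, p.IsPath →
        (p.length : ℝ) ≤ (1 + γ) * ((nbrGraphOn d Xs ε0).dist x y) →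
        ∀ v ∈ p.support, v ∈ C i ∩ Xs := by
    intro i x hx y hy p hp hlen v hv
    have hsuppXs : ∀ v ∈ p.support, v ∈ Xs :=
      aux_support_mem_of_closed hclosedOn p hx.2
    have hqe : ∀ e ∈ p.edges, e ∈ (nbrGraph d ε0).edgeSet :=
      fun e he => SimpleGraph.edgeSet_mono hsub (p.edges_subset_edgeSet he)
    have hq : (p.transfer _ hqe).IsPath := hp.transfer hqe
    have hqlen : (p.transfer _ hqe).length = p.length := p.length_transfer hqe
    have hqsupp : (p.transfer _ hqe).support = p.support := p.support_transfer hqe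
    have hd : (nbrGraphOn d Xs ε0).dist x y = (nbrGraph d ε0).dist x y :=
      hdist x y hx.2 (p.transfer _ hqe).reachable
    have hvC : v ∈ C i := by
      refine hconv i ε0 (hle i) x hx.1 y hy.1 (p.transfer _ hqe).reachable _ hq ?_ v
        (by rw [hqsupp]; exact hv)
      rw [hqlen, ← hd]
      exact hlen
    exact ⟨hvC, hsuppXs v hv⟩
  refine ⟨?_, ?_, part3⟩
  · -- part 1: connectedness
    intro i hnei
    obtain ⟨x0, hx0⟩ := hnei
    have hreachXs : ∀ a ∈ Xs, ∀ b ∈ Xs, (nbrGraph d ε0).Reachable a b := by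
      intro a ha b hb
      rw [hXs] at ha hb
      obtain ⟨c, hc, hca⟩ := ha
      obtain ⟨c', hc', hc'b⟩ := hb
      have hcc' : (nbrGraph d ε0).Reachable c c' := by
        have := (hconn i0).preconnected ⟨c, hc⟩ ⟨c', hc'⟩
        exact this.map (SimpleGraph.Embedding.induce (C i0)).toHom
      exact hca.symm.trans (hcc'.trans hc'b)
    rw [SimpleGraph.connected_iff]
    refine ⟨?_, ⟨⟨x0, hx0⟩⟩⟩
    · rintro ⟨x, hx⟩ ⟨y, hy⟩
      have hr : (nbrGraph d ε0).Reachable x y := hreachXs x hx.2 y hy.2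
      obtain ⟨p, hp, hlen⟩ := hr.exists_path_of_dist
      have hsuppXs : ∀ v ∈ p.support, v ∈ Xs :=
        aux_support_mem_of_closed hclosed p hx.2
      have hsuppC : ∀ v ∈ p.support, v ∈ C i := by
        refine hconv i ε0 (hle i) x hx.1 y hy.1 hr p hp ?_
        rw [hlen]
        have h0 : (0:ℝ) ≤ ((nbrGraph d ε0).dist x y : ℝ) := Nat.cast_nonneg _
        nlinarith
      have hqe := htrans p hsuppXs
      have hqsupp : (p.transfer _ hqe).support = p.support := p.support_transfer hqe
      exact aux_reachable_induce_of_support (S := C i ∩ Xs) (p.transfer _ hqe)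
        (fun v hv => ⟨hsuppC v (hqsupp ▸ hv), hsuppXs v (hqsupp ▸ hv)⟩) hx hy
  · -- part 2: margin
    intro i x hx y _ hyC
    calc β * ε0 ≤ β * ε i := by nlinarith [hle i]
      _ < d x y := hmargin i x hx.1 y hyC
end

section
/- Consider X ⊂ ℝ consisting of n collinear points equally spaced at distance ε/2, alternately assigned to two clusters C₁ and C₂ (points at even positions in C₁, odd positions in C₂). Then with radius ε this clustering satisfies connectedness (each cluster induces a connected subgraph of G_X(ε)) and local metric margin for any β < 1/2, but violates geodesic convexity with margin γ for every γ ≥ c/n for a suitable constant c: there exist x,y ∈ C₁ and a simple path between them in G_X(ε) of length at most (1+γ)·d_{G_X(ε)}(x,y) that passes through a point of C₂. -/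
noncomputable abbrev lineG (n : ℕ) (ε : ℝ) : SimpleGraph (Fin n) :=
  nbrGraph (fun i j : Fin n => |((i : ℕ) : ℝ) - ((j : ℕ) : ℝ)| * (ε / 2)) ε

lemma adj_of {n : ℕ} {ε : ℝ} (hε : 0 < ε) {i j : Fin n} (hne : i ≠ j)
    (h1 : (i : ℕ) ≤ (j : ℕ) + 2) (h2 : (j : ℕ) ≤ (i : ℕ) + 2) :
    (lineG n ε).Adj i j := by
  have c1 : ((i : ℕ) : ℝ) ≤ ((j : ℕ) : ℝ) + 2 := by exact_mod_cast h1
  have c2 : ((j : ℕ) : ℝ) ≤ ((i : ℕ) : ℝ) + 2 := by exact_mod_cast h2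
  have habs : |((i : ℕ) : ℝ) - ((j : ℕ) : ℝ)| ≤ 2 := by
    rw [abs_le]; constructor <;> linarith
  have habs' : |((j : ℕ) : ℝ) - ((i : ℕ) : ℝ)| ≤ 2 := by
    rw [abs_sub_comm]; exact habs
  have hh : (0:ℝ) < ε / 2 := by linarith
  refine ⟨hne, ?_, ?_⟩
  · have := mul_le_mul_of_nonneg_right habs hh.le
    simpa using (by linarith : |((i : ℕ) : ℝ) - ((j : ℕ) : ℝ)| * (ε/2) ≤ ε)
  · have := mul_le_mul_of_nonneg_right habs' hh.le
    simpa using (by linarith : |((j : ℕ) : ℝ) - ((i : ℕ) : ℝ)| * (ε/2) ≤ ε)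

lemma adj_bound {n : ℕ} {ε : ℝ} (hε : 0 < ε) {i j : Fin n}
    (h : (lineG n ε).Adj i j) : |((i : ℕ) : ℝ) - ((j : ℕ) : ℝ)| ≤ 2 := by
  have hd : |((i : ℕ) : ℝ) - ((j : ℕ) : ℝ)| * (ε / 2) ≤ ε := h.2.1
  have hh : (0:ℝ) < ε / 2 := by linarith
  have : |((i : ℕ) : ℝ) - ((j : ℕ) : ℝ)| * (ε / 2) ≤ 2 * (ε / 2) := by linarith
  exact le_of_mul_le_mul_right this hh

lemma walk_bound {n : ℕ} {ε : ℝ} (hε : 0 < ε) {a b : Fin n}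
    (p : (lineG n ε).Walk a b) :
    |((a : ℕ) : ℝ) - ((b : ℕ) : ℝ)| ≤ 2 * p.length := by
  induction p with
  | nil => simp
  | @cons u v w h q ih =>
    have h2 := adj_bound hε h
    rw [SimpleGraph.Walk.length_cons]
    push_cast
    calc |((u : ℕ) : ℝ) - ((w : ℕ) : ℝ)|
        ≤ |((u : ℕ) : ℝ) - ((v : ℕ) : ℝ)| + |((v : ℕ) : ℝ) - ((w : ℕ) : ℝ)| :=
          abs_sub_le _ _ _
      _ ≤ 2 * (q.length + 1) := by linarith

/-- walk along even steps -/
lemma evenWalk {n : ℕ} {ε : ℝ} (hε : 0 < ε) :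
    ∀ (k a b : ℕ), b = a + 2 * k → ∀ (ha : a < n) (hb : b < n),
      ∃ p : (lineG n ε).Walk ⟨a, ha⟩ ⟨b, hb⟩,
        p.length = k ∧ p.IsPath ∧ ∀ v ∈ p.support, a ≤ (v : ℕ) := by
  intro k
  induction k with
  | zero =>
    intro a b hab ha hb
    subst hab
    exact ⟨SimpleGraph.Walk.nil, rfl, by simp, by simp⟩
  | succ k ih =>
    intro a b hab ha hb
    have ha2 : a + 2 < n := by omega
    obtain ⟨q, hql, hqp, hqs⟩ := ih (a + 2) b (by omega) ha2 hb
    have hadj : (lineG n ε).Adj ⟨a, ha⟩ ⟨a + 2, ha2⟩ :=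
      adj_of hε (by simp [Fin.ext_iff]) (by show a ≤ a + 2 + 2; omega) (by show a + 2 ≤ a + 2; omega)
    refine ⟨SimpleGraph.Walk.cons hadj q, by simp [hql], ?_, ?_⟩
    · refine hqp.cons ?_
      intro hmem
      have h2 : a + 2 ≤ a := hqs _ hmem
      omega
    · intro v hv
      rw [SimpleGraph.Walk.support_cons, List.mem_cons] at hv
      rcases hv with rfl | hv
      · show a ≤ a; omega
      · have := hqs _ hv; omega

lemma reach_base {n : ℕ} {ε : ℝ} (hε : 0 < ε) (s : Set (Fin n)) (b : Fin n) (hb : b ∈ s)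
    (H : ∀ a : Fin n, a ∈ s → a ≠ b → ∃ a' : Fin n, a' ∈ s ∧ (a' : ℕ) + 2 = (a : ℕ)) :
    ∀ a : ↥s, ((lineG n ε).induce s).Reachable a ⟨b, hb⟩ := by
  suffices h : ∀ m (a : ↥s), ((a : Fin n) : ℕ) = m →
      ((lineG n ε).induce s).Reachable a ⟨b, hb⟩ by
    intro a; exact h _ a rfl
  intro m
  induction m using Nat.strong_induction_on with
  | _ m ih =>
    intro a hm
    by_cases hab : (a : Fin n) = b
    · have heq : a = ⟨b, hb⟩ := by
        apply Subtype.ext; exact hab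
      rw [heq]
    · obtain ⟨a', ha's, ha'⟩ := H _ a.2 hab
      have hlt : (a' : ℕ) < m := by omega
      have r1 : ((lineG n ε).induce s).Reachable ⟨a', ha's⟩ ⟨b, hb⟩ := ih _ hlt _ rfl
      have hadj' : (lineG n ε).Adj (a : Fin n) a' :=
        adj_of hε (by simp [Fin.ext_iff]; omega) (by show ((a : Fin n) : ℕ) ≤ a' + 2; omega)
          (by show (a' : ℕ) ≤ ((a : Fin n) : ℕ) + 2; omega)
      have hadj : ((lineG n ε).induce s).Adj a ⟨a', ha's⟩ := hadj'
      exact hadj.reachable.trans r1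

/-- `n` collinear points spaced `ε/2` apart, alternately assigned to
`C₁` (even positions) and `C₂` (odd positions).  With radius `ε` this clustering is
connected and has local metric margin for every `β < 1/2`, but violates geodesic
convexity with margin `γ` for every `γ ≥ c/n`, for a suitable constant `c`. -/
theorem stmt_13 :
    ∃ c : ℝ, 0 < c ∧
      ∀ (n : ℕ), 4 ≤ n → ∀ ε : ℝ, 0 < ε →
        ∀ (d : Fin n → Fin n → ℝ), (d = fun i j : Fin n => |((i : ℕ) : ℝ) - ((j : ℕ) : ℝ)| * (ε / 2)) →
        ∀ (C₁ C₂ : Set (Fin n)),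
          C₁ = {i : Fin n | Even (i : ℕ)} → C₂ = {i : Fin n | Odd (i : ℕ)} →
          -- connectedness of both clusters in `G_X(ε)`
          ((nbrGraph d ε).induce C₁).Connected ∧
          ((nbrGraph d ε).induce C₂).Connected ∧
          -- local metric margin for every β < 1/2
          (∀ β : ℝ, 0 < β → β < 1 / 2 →
            ∀ x ∈ C₁, ∀ y ∈ C₂, β * ε < d x y) ∧
          -- violation of geodesic convexity with margin γ for every γ ≥ c/n
          (∀ γ : ℝ, 0 < γ → c / (n : ℝ) ≤ γ →
            ∃ x ∈ C₁, ∃ y ∈ C₁, ∃ p : (nbrGraph d ε).Walk x y, p.IsPath ∧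
              (p.length : ℝ) ≤ (1 + γ) * ((nbrGraph d ε).dist x y) ∧
              ∃ v ∈ p.support, v ∈ C₂) := by
  refine ⟨4, by norm_num, ?_⟩
  intro n hn ε hε d hd C₁ C₂ hC₁ hC₂
  subst hd hC₁ hC₂
  have h0 : (0 : ℕ) < n := by omega
  have h1 : (1 : ℕ) < n := by omega
  refine ⟨?_, ?_, ?_, ?_⟩
  · -- C₁ connected
    have h0m : (⟨0, h0⟩ : Fin n) ∈ {i : Fin n | Even (i : ℕ)} := by simp
    have key := reach_base hε {i : Fin n | Even (i : ℕ)} ⟨0, h0⟩ h0m ?_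
    · haveI : Nonempty ↥{i : Fin n | Even (i : ℕ)} := ⟨⟨⟨0, h0⟩, h0m⟩⟩
      exact ⟨fun u v => (key u).trans (key v).symm⟩
    · intro a ha hab
      obtain ⟨t, ht⟩ := ha
      have hane : (a : ℕ) ≠ 0 := by
        intro h; exact hab (Fin.ext h)
      refine ⟨⟨(a : ℕ) - 2, by omega⟩, ⟨t - 1, by simp; omega⟩, by simp; omega⟩
  · -- C₂ connected
    have h1m : (⟨1, h1⟩ : Fin n) ∈ {i : Fin n | Odd (i : ℕ)} := by simp
    have key := reach_base hε {i : Fin n | Odd (i : ℕ)} ⟨1, h1⟩ h1m ?_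
    · haveI : Nonempty ↥{i : Fin n | Odd (i : ℕ)} := ⟨⟨⟨1, h1⟩, h1m⟩⟩
      exact ⟨fun u v => (key u).trans (key v).symm⟩
    · intro a ha hab
      obtain ⟨t, ht⟩ := ha
      have hane : (a : ℕ) ≠ 1 := by
        intro h; exact hab (Fin.ext h)
      refine ⟨⟨(a : ℕ) - 2, by omega⟩, ⟨t - 1, by simp; omega⟩, by simp; omega⟩
  · -- margin
    intro β hβ hβ2 x hx y hy
    simp only [Set.mem_setOf_eq] at hx hy
    have hxy : (x : ℕ) ≠ (y : ℕ) := by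
      intro h; rw [h] at hx; exact (Nat.not_even_iff_odd.mpr hy) hx
    have h1le : (1 : ℝ) ≤ |((x : ℕ) : ℝ) - ((y : ℕ) : ℝ)| := by
      have : ((x : ℕ) : ℤ) ≠ ((y : ℕ) : ℤ) := by exact_mod_cast hxy
      have := Int.one_le_abs (sub_ne_zero.mpr this)
      calc (1 : ℝ) ≤ ((|((x : ℕ) : ℤ) - ((y : ℕ) : ℤ)| : ℤ) : ℝ) := by exact_mod_cast this
        _ = |((x : ℕ) : ℝ) - ((y : ℕ) : ℝ)| := by push_cast; ring_nf
    have : β * ε < 1 * (ε / 2) := by nlinarith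
    calc β * ε < 1 * (ε / 2) := this
      _ ≤ |((x : ℕ) : ℝ) - ((y : ℕ) : ℝ)| * (ε / 2) := by nlinarith
  · -- violation
    intro γ hγ hγc
    set k : ℕ := (n - 1) / 2 with hk
    have hk1 : 1 ≤ k := by omega
    have hm : 2 * k < n := by omega
    have h2n : (2 : ℕ) < n := by omega
    refine ⟨⟨0, h0⟩, by simp, ⟨2 * k, hm⟩, by simp, ?_⟩
    -- the violating path 0 → 1 → 2 → 4 → ⋯ → 2k
    obtain ⟨q, hql, hqp, hqs⟩ := evenWalk (n := n) hε (k - 1) 2 (2 * k) (by omega) h2n hm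
    have hadj01 : (lineG n ε).Adj ⟨0, h0⟩ ⟨1, h1⟩ :=
      adj_of hε (by simp [Fin.ext_iff]) (by simp) (by simp)
    have hadj12 : (lineG n ε).Adj ⟨1, h1⟩ ⟨2, h2n⟩ :=
      adj_of hε (by simp [Fin.ext_iff]) (by simp) (by simp)
    refine ⟨SimpleGraph.Walk.cons hadj01 (SimpleGraph.Walk.cons hadj12 q), ?_, ?_, ?_⟩
    · refine ((hqp.cons ?_).cons ?_)
      · intro hmem
        have h2 : (2 : ℕ) ≤ 1 := hqs _ hmem
        omega
      · intro hmem
        rw [SimpleGraph.Walk.support_cons, List.mem_cons] at hmem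
        rcases hmem with hmem | hmem
        · have : (0 : ℕ) = 1 := congrArg Fin.val hmem
          omega
        · have h2 : (2 : ℕ) ≤ 0 := hqs _ hmem
          omega
    · -- length bound
      -- first compute dist = k
      obtain ⟨q₀, hq₀l, _, _⟩ := evenWalk (n := n) hε k 0 (2 * k) (by omega) h0 hm
      have hdle : (lineG n ε).dist ⟨0, h0⟩ ⟨2 * k, hm⟩ ≤ k := by
        exact le_trans (SimpleGraph.dist_le q₀) (le_of_eq hq₀l)
      have hreach : (lineG n ε).Reachable ⟨0, h0⟩ ⟨2 * k, hm⟩ := ⟨q₀⟩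
      obtain ⟨p₀, hp₀⟩ := hreach.exists_walk_length_eq_dist
      have hlb := walk_bound hε p₀
      rw [hp₀] at hlb
      have hlb' : |((0 : ℕ) : ℝ) - ((2 * k : ℕ) : ℝ)|
          ≤ 2 * ((lineG n ε).dist ⟨0, h0⟩ ⟨2 * k, hm⟩) := hlb
      have habs : |((0 : ℕ) : ℝ) - ((2 * k : ℕ) : ℝ)| = ((2 * k : ℕ) : ℝ) := by
        push_cast
        rw [abs_sub_comm, sub_zero]
        exact abs_of_nonneg (by positivity)
      rw [habs] at hlb'
      have hkd : k ≤ (lineG n ε).dist ⟨0, h0⟩ ⟨2 * k, hm⟩ := by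
        have h2 : ((k : ℕ) : ℝ) ≤ (((lineG n ε).dist ⟨0, h0⟩ ⟨2 * k, hm⟩ : ℕ) : ℝ) := by
          push_cast at hlb' ⊢; linarith
        exact_mod_cast h2
      have hdist : (lineG n ε).dist ⟨0, h0⟩ ⟨2 * k, hm⟩ = k := le_antisymm hdle hkd
      have hlen : (SimpleGraph.Walk.cons hadj01 (SimpleGraph.Walk.cons hadj12 q)).length = k + 1 := by
        simp only [SimpleGraph.Walk.length_cons, hql]; omega
      rw [hlen, hdist]
      -- need (k+1 : ℝ) ≤ (1+γ) * k
      have hnk : (n : ℝ) ≤ 4 * k := by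
        have : n ≤ 4 * k := by omega
        exact_mod_cast this
      have hnpos : (0 : ℝ) < n := by exact_mod_cast h0
      have hγ4 : 4 / (n : ℝ) ≤ γ := hγc
      have hkpos : (1 : ℝ) ≤ k := by exact_mod_cast hk1
      have h1γk : (1 : ℝ) ≤ γ * k := by
        have h4nk : (1 : ℝ) ≤ 4 / n * k := by
          rw [div_mul_eq_mul_div, le_div_iff₀ hnpos]
          linarith
        calc (1 : ℝ) ≤ 4 / n * k := h4nk
          _ ≤ γ * k := by
            apply mul_le_mul_of_nonneg_right hγ4
            linarith
      push_cast
      nlinarith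
    · refine ⟨⟨1, h1⟩, ?_, by simp⟩
      rw [SimpleGraph.Walk.support_cons, SimpleGraph.Walk.support_cons]
      exact List.mem_cons_of_mem _ List.mem_cons_self
end

section
/- Nested separator cuts trace back: let R¹ ⊇ R² ⊇ ... ⊇ R^ℓ be vertex sets in a graph G and S¹, ..., S^{ℓ-1} sets such that for each t, R^{t+1} is the vertex set of a connected component of G[R^t ∩ S^t]. If (x,y) is an edge of G with exactly one endpoint in R^ℓ (say x ∈ R^ℓ, y ∉ R^ℓ), then there exists τ ∈ {1,...,ℓ-1} with x ∈ S^τ and y ∉ S^τ. -/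
/-- nested separator cuts trace back.  Let `R¹ ⊇ R² ⊇ … ⊇ Rˡ` and
`S¹,…,S^{ℓ-1}` be such that for each `t`, `R^{t+1}` is the vertex set of a connected
component of `G[Rᵗ ∩ Sᵗ]` (and, as in the paper, `R¹` is a union of connected
components of `G`, i.e. closed under adjacency).  If `(x,y)` is an edge of `G` with
`x ∈ Rˡ` and `y ∉ Rˡ`, then there is `τ ∈ {1,…,ℓ-1}` with `x ∈ Sᵗ` and `y ∉ Sᵗ`. -/
theorem stmt_17 {V : Type*} [Fintype V] [DecidableEq V] (G : SimpleGraph V)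
    (ℓ : ℕ) (hℓ : 2 ≤ ℓ) (R S : ℕ → Set V)
    (hR1closed : ∀ a b : V, G.Adj a b → a ∈ R 1 → b ∈ R 1)
    (hcomp : ∀ t : ℕ, 1 ≤ t → t < ℓ →
      ∃ v ∈ R t ∩ S t, R (t + 1) =
        {u : V | Relation.ReflTransGen
          (fun a b => G.Adj a b ∧ a ∈ R t ∩ S t ∧ b ∈ R t ∩ S t) v u}) :
    ∀ x y : V, G.Adj x y → x ∈ R ℓ → y ∉ R ℓ →
      ∃ τ : ℕ, 1 ≤ τ ∧ τ < ℓ ∧ x ∈ S τ ∧ y ∉ S τ := by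
  classical
  intro x y hxy hxR hyR
  have hsub : ∀ t : ℕ, 1 ≤ t → t < ℓ → R (t + 1) ⊆ R t ∩ S t := by
    intro t h1 h2 u hu
    obtain ⟨v, hv, hRt⟩ := hcomp t h1 h2
    rw [hRt] at hu
    induction hu with
    | refl => exact hv
    | tail _ h _ => exact h.2.2
  have key : ∀ k t : ℕ, 1 ≤ t → t + k = ℓ → x ∈ R t := by
    intro k
    induction k with
    | zero => intro t _ h2; simpa [← h2] using hxR
    | succ k ih =>
      intro t h1 h2
      have hx' := ih (t + 1) (by omega) (by omega)
      exact (hsub t h1 (by omega) hx').1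
  have hP : ∃ t : ℕ, 1 ≤ t ∧ t < ℓ ∧ y ∉ R (t + 1) := by
    refine ⟨ℓ - 1, by omega, by omega, ?_⟩
    have : ℓ - 1 + 1 = ℓ := by omega
    rw [this]; exact hyR
  set τ := Nat.find hP with hτdef
  obtain ⟨hτ1, hτℓ, hyRτ1⟩ := Nat.find_spec hP
  have hyRτ : y ∈ R τ := by
    rcases eq_or_lt_of_le hτ1 with h | h
    · have : x ∈ R 1 := key (ℓ - 1) 1 le_rfl (by omega)
      have := hR1closed x y hxy this
      rw [hτdef, ← h]; exact this
    · have hmin := Nat.find_min hP (m := τ - 1) (by omega)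
      push_neg at hmin
      have := hmin (by omega) (by omega)
      have heq : τ - 1 + 1 = τ := by omega
      rwa [heq] at this
  have hxRτ1 : x ∈ R (τ + 1) := key (ℓ - (τ + 1)) (τ + 1) (by omega) (by omega)
  have hxmem : x ∈ R τ ∩ S τ := hsub τ hτ1 hτℓ hxRτ1
  refine ⟨τ, hτ1, hτℓ, hxmem.2, ?_⟩
  intro hySτ
  apply hyRτ1
  obtain ⟨v, hv, hRt⟩ := hcomp τ hτ1 hτℓ
  rw [hRt] at hxRτ1 ⊢
  exact hxRτ1.tail ⟨hxy, hxmem, hyRτ, hySτ⟩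
end
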